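/- Let a > b > 0 be coprime positive integers. Then the infimum over r ∈ (0, π/2) of K(r) = (3a⁴ + 26a²b² + 3b⁴ + 4(a⁴-b⁴)cos 2r + (a²-b²)²cos 4r) / (2(a²+b² + (a²-b²)cos 2r)²) is 1 + 3b²/a², which is strictly greater than 1 and strictly less than 4. -/

import Mathlib

open Real Set Filter Topology

/-- For coprime integers `a > b > 0`, the infimum over `(0, π/2)` of the Gaussian
curvature `K` of the complex weighted projective line with weights `(a, b)` equals
`1 + 3b²/a²`, which lies strictly between `1` and `4`. -/
theorem stmt3 (a b : ℕ) (hb : 0 < b) (hab : b < a) (hcop : Nat.Coprime a b)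
    (K : ℝ → ℝ)
    (hK : ∀ r, K r =
      (3*(a:ℝ)^4 + 26*(a:ℝ)^2*(b:ℝ)^2 + 3*(b:ℝ)^4
          + 4*((a:ℝ)^4 - (b:ℝ)^4) * Real.cos (2*r)
          + ((a:ℝ)^2 - (b:ℝ)^2)^2 * Real.cos (4*r)) /
        (2 * ((a:ℝ)^2 + (b:ℝ)^2 + ((a:ℝ)^2 - (b:ℝ)^2) * Real.cos (2*r))^2)) :
    sInf (K '' Set.Ioo 0 (Real.pi/2)) = 1 + 3*(b:ℝ)^2/(a:ℝ)^2 ∧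
    1 < 1 + 3*(b:ℝ)^2/(a:ℝ)^2 ∧
    1 + 3*(b:ℝ)^2/(a:ℝ)^2 < 4 := by
  have ha0 : (0:ℝ) < a := by exact_mod_cast hb.trans hab
  have hb0 : (0:ℝ) < b := by exact_mod_cast hb
  have habR : (b:ℝ) < a := by exact_mod_cast hab
  set A : ℝ := (a:ℝ)^2 with hAdef
  set B : ℝ := (b:ℝ)^2 with hBdef
  have hA : 0 < A := by positivity
  have hB : 0 < B := by positivity
  have hBA : B < A := by
    apply pow_lt_pow_left₀ habR hb0.le
    norm_num
  have hu : ∀ r : ℝ, 0 < A + B + (A - B) * Real.cos (2*r) := by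
    intro r
    nlinarith [Real.neg_one_le_cos (2*r), Real.cos_le_one (2*r)]
  have hK' : ∀ r : ℝ, K r = 1 + 12*A*B/(A + B + (A - B)*Real.cos (2*r))^2 := by
    intro r
    have h4 : Real.cos (4*r) = 2 * Real.cos (2*r)^2 - 1 := by
      have h : (4:ℝ)*r = 2*(2*r) := by ring
      rw [h, Real.cos_two_mul]
    have hne : (A + B + (A - B)*Real.cos (2*r)) ≠ 0 := (hu r).ne'
    rw [hK, h4]
    rw [show (a:ℝ)^4 = A^2 by rw [hAdef]; ring, show (b:ℝ)^4 = B^2 by rw [hBdef]; ring]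
    rw [div_eq_iff (by positivity), add_mul, show 12*A*B/(A + B + (A - B)*Real.cos (2*r))^2 * (2 * (A + B + (A - B)*Real.cos (2*r))^2) = 24*A*B by rw [div_mul_eq_mul_div, div_eq_iff (pow_ne_zero 2 hne)]; ring]
    ring
  set S := K '' Set.Ioo 0 (Real.pi/2) with hS
  have hne : S.Nonempty := by
    refine ⟨K (Real.pi/4), ⟨Real.pi/4, ⟨by positivity, by linarith [Real.pi_pos]⟩, rfl⟩⟩
  have hlow : ∀ x ∈ S, 1 + 3*B/A ≤ x := by
    rintro x ⟨r, hr, rfl⟩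
    rw [hK' r]
    have h1 : A + B + (A - B)*Real.cos (2*r) ≤ 2*A := by
      nlinarith [Real.cos_le_one (2*r)]
    have h2 := hu r
    have h3 : 3*B/A ≤ 12*A*B/(A + B + (A - B)*Real.cos (2*r))^2 := by
      rw [div_le_div_iff₀ hA (by positivity)]
      nlinarith [mul_nonneg (mul_nonneg hB.le (by linarith : (0:ℝ) ≤ 2*A - (A + B + (A - B)*Real.cos (2*r)))) (by linarith : (0:ℝ) ≤ 2*A + (A + B + (A - B)*Real.cos (2*r)))]
    linarith
  have hbdd : BddBelow S := ⟨1 + 3*B/A, hlow⟩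
  -- the limit as r → 0⁺
  have hval : A + B + (A - B)*Real.cos (2*(0:ℝ)) = 2*A := by
    simp [Real.cos_zero]
    ring
  have hc : ContinuousAt (fun r : ℝ => 1 + 12*A*B/(A + B + (A - B)*Real.cos (2*r))^2) 0 := by
    apply ContinuousAt.add continuousAt_const
    apply ContinuousAt.div continuousAt_const
    · fun_prop
    · simp only [hval]
      positivity
  have hf0 : (fun r : ℝ => 1 + 12*A*B/(A + B + (A - B)*Real.cos (2*r))^2) 0 = 1 + 3*B/A := by
    simp only [hval]
    field_simp
    ring
  have htend : Tendsto (fun r : ℝ => 1 + 12*A*B/(A + B + (A - B)*Real.cos (2*r))^2)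
      (nhdsWithin 0 (Ioi 0)) (nhds (1 + 3*B/A)) := by
    rw [← hf0]
    exact hc.tendsto.mono_left nhdsWithin_le_nhds
  have hev : ∀ᶠ r in nhdsWithin (0:ℝ) (Ioi 0),
      sInf S ≤ 1 + 12*A*B/(A + B + (A - B)*Real.cos (2*r))^2 := by
    filter_upwards [Ioo_mem_nhdsGT_of_mem (by constructor <;> [rfl; positivity] :
        (0:ℝ) ∈ Ico (0:ℝ) (Real.pi/2))] with r hr
    have : K r ∈ S := ⟨r, hr, rfl⟩
    have h := csInf_le hbdd this
    rwa [hK' r] at h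
  have hle : sInf S ≤ 1 + 3*B/A := ge_of_tendsto htend hev
  refine ⟨le_antisymm hle (le_csInf hne hlow), ?_, ?_⟩
  · have : 0 < 3*B/A := by positivity
    linarith
  · have : 3*B/A < 3 := by
      rw [div_lt_iff₀ hA]
      nlinarith
    linarith
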